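/- Let F : Finset α → ℝ be a monotone submodular set function on subsets of a finite ground set Ω with F(∅) = 0, and let K ≥ 1. Let G_t be the set produced by the greedy algorithm after t steps (starting from G_0 = ∅ and at each step adding an element maximizing the marginal gain). Then for every set A ⊆ Ω with |A| ≤ K and every t, F(A) - F(G_t) ≤ (1 - 1/K)^t · (F(A) - F(G_0)); in particular F(G_K) ≥ (1 - (1 - 1/K)^K) · F(A). -/

import Mathlib

lemma sum_gain_bound {α : Type*} [DecidableEq α] (F : Finset α → ℝ)
    (hmono : ∀ A B : Finset α, A ⊆ B → F A ≤ F B)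
    (hsub : ∀ A B : Finset α, A ⊆ B → ∀ c ∉ B,
      F (insert c B) - F B ≤ F (insert c A) - F A)
    (S B : Finset α) :
    F (S ∪ B) - F B ≤ ∑ a ∈ S, (F (insert a B) - F B) := by
  induction S using Finset.induction_on with
  | empty => simp
  | @insert a S ha ih =>
    rw [Finset.sum_insert ha, Finset.insert_union]
    have h1 : F (insert a (S ∪ B)) - F (S ∪ B) ≤ F (insert a B) - F B := by
      by_cases haB : a ∈ S ∪ B
      · rw [Finset.insert_eq_self.mpr haB]
        have := hmono B (insert a B) (Finset.subset_insert a B)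
        linarith
      · exact hsub B (S ∪ B) Finset.subset_union_right a haB
    linarith

theorem stmt5 {α : Type*} [DecidableEq α] (Ω : Finset α) (F : Finset α → ℝ)
    (hF0 : F ∅ = 0)
    (hmono : ∀ A B : Finset α, A ⊆ B → F A ≤ F B)
    (hsub : ∀ A B : Finset α, A ⊆ B → ∀ c ∉ B,
      F (insert c B) - F B ≤ F (insert c A) - F A)
    (K : ℕ) (hK : 1 ≤ K)
    (G : ℕ → Finset α) (hG0 : G 0 = ∅)
    (hGsub : ∀ t, G t ⊆ Ω)
    (hGstep : ∀ t, ∃ e ∈ Ω, G (t + 1) = insert e (G t) ∧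
      ∀ e' ∈ Ω, F (insert e' (G t)) - F (G t) ≤ F (insert e (G t)) - F (G t)) :
    ∀ A : Finset α, A ⊆ Ω → A.card ≤ K →
      (∀ t : ℕ, F A - F (G t) ≤ (1 - 1 / (K : ℝ)) ^ t * (F A - F (G 0))) ∧
      (1 - (1 - 1 / (K : ℝ)) ^ K) * F A ≤ F (G K) := by
  intro A hAΩ hAcard
  have hKpos : (0:ℝ) < K := by exact_mod_cast hK
  have hc0 : (0:ℝ) ≤ 1 - 1 / (K : ℝ) := by
    have : 1 / (K:ℝ) ≤ 1 := by
      rw [div_le_one hKpos]; exact_mod_cast hK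
    linarith
  have step : ∀ t, F A - F (G (t+1)) ≤ (1 - 1 / (K:ℝ)) * (F A - F (G t)) := by
    intro t
    obtain ⟨e, heΩ, hstep, hmax⟩ := hGstep t
    set g := F (G (t+1)) - F (G t) with hg
    have hg' : ∀ e' ∈ Ω, F (insert e' (G t)) - F (G t) ≤ g := by
      intro e' he'; rw [hg, hstep]; exact hmax e' he'
    have hgnn : 0 ≤ g := by
      rw [hg, hstep]
      have := hmono (G t) (insert e (G t)) (Finset.subset_insert e (G t))
      linarith
    have hsum : F (A ∪ G t) - F (G t) ≤ ∑ a ∈ A, (F (insert a (G t)) - F (G t)) :=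
      sum_gain_bound F hmono hsub A (G t)
    have hsum2 : ∑ a ∈ A, (F (insert a (G t)) - F (G t)) ≤ (A.card : ℝ) * g := by
      calc ∑ a ∈ A, (F (insert a (G t)) - F (G t)) ≤ ∑ _a ∈ A, g :=
            Finset.sum_le_sum (fun a ha => hg' a (hAΩ ha))
        _ = (A.card : ℝ) * g := by rw [Finset.sum_const, nsmul_eq_mul]
    have hcard : (A.card : ℝ) * g ≤ (K : ℝ) * g := by
      apply mul_le_mul_of_nonneg_right _ hgnn
      exact_mod_cast hAcard
    have hmonoA : F A ≤ F (A ∪ G t) := hmono A (A ∪ G t) Finset.subset_union_left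
    have key : F A - F (G t) ≤ (K:ℝ) * g := by linarith
    have : (1 - 1 / (K:ℝ)) * (F A - F (G t)) = (F A - F (G t)) - (F A - F (G t)) / K := by
      field_simp
    rw [this]
    have hdiv : (F A - F (G t)) / K ≤ g := by
      rw [div_le_iff₀ hKpos]; linarith [key]
    rw [hg] at hdiv
    linarith
  have main : ∀ t : ℕ, F A - F (G t) ≤ (1 - 1 / (K : ℝ)) ^ t * (F A - F (G 0)) := by
    intro t
    induction t with
    | zero => simp
    | succ n ih =>
      calc F A - F (G (n+1)) ≤ (1 - 1 / (K:ℝ)) * (F A - F (G n)) := step n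
        _ ≤ (1 - 1 / (K:ℝ)) * ((1 - 1 / (K : ℝ)) ^ n * (F A - F (G 0))) :=
            mul_le_mul_of_nonneg_left ih hc0
        _ = (1 - 1 / (K : ℝ)) ^ (n+1) * (F A - F (G 0)) := by ring
  refine ⟨main, ?_⟩
  have := main K
  rw [hG0, hF0] at this
  nlinarith [this]
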